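/- Let h > 0, x > 0 and θ ∈ ℝ. Then the series −(1/h) · ∑_{n=1}^{∞} (1/n) · ∑_{k=0}^{n} (−1)^k · C(n,k) · (θ + k·h) · e^{−(θ + k·h)·x} converges and its sum equals (1 − θ·x) · e^{−θ·x}, which is the partial derivative with respect to θ of the function φ(θ, x) = θ · e^{−θ·x}. -/

import Mathlib

open Real Finset

lemma lemA (r : ℝ) (n : ℕ) :
    ∑ k ∈ Finset.range (n + 1), (-1 : ℝ) ^ k * (n.choose k : ℝ) * r ^ k = (1 - r) ^ n := by
  rw [show (1 : ℝ) - r = -r + 1 by ring, add_pow]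
  refine Finset.sum_congr rfl fun k _ => ?_
  rw [neg_pow]; ring

lemma lemB (r : ℝ) (n : ℕ) :
    ∑ k ∈ Finset.range (n + 2), (-1 : ℝ) ^ k * (k : ℝ) * (((n+1).choose k : ℝ)) * r ^ k
      = -((n : ℝ) + 1) * r * (1 - r) ^ n := by
  rw [Finset.sum_range_succ']
  have key : ∀ j : ℕ, (-1 : ℝ) ^ (j+1) * ((j:ℝ)+1) * (((n+1).choose (j+1) : ℝ)) * r ^ (j+1)
      = (-((n:ℝ)+1) * r) * ((-1:ℝ)^j * ((n.choose j : ℝ)) * r ^ j) := by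
    intro j
    have hc : ((n+1).choose (j+1) : ℝ) * ((j:ℝ)+1) = ((n:ℝ)+1) * (n.choose j : ℝ) := by
      have := congrArg (Nat.cast : ℕ → ℝ) (Nat.add_one_mul_choose_eq n j)
      push_cast at this
      linarith
    linear_combination (-(-1:ℝ)^j * r ^ j * r) * hc
  have h2 : ∀ j ∈ Finset.range (n+1), (-1 : ℝ) ^ (j+1) * ((j+1 : ℕ) : ℝ) * (((n+1).choose (j+1) : ℝ)) * r ^ (j+1)
      = (-((n:ℝ)+1) * r) * ((-1:ℝ)^j * ((n.choose j : ℝ)) * r ^ j) := by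
    intro j _; push_cast; exact key j
  rw [Finset.sum_congr rfl h2, ← Finset.mul_sum, lemA]
  push_cast
  ring



open Real in
/-- Example 1 of the paper, eq. (10): for `h, x > 0` the
logarithmic series for `φ(θ, x) = θ e^{-θx}` converges and sums to
`(1 - θx) e^{-θx} = ∂φ/∂θ`.  (The `n = 0` term is `0` since `1/0 = 0` in `ℝ`.) -/
theorem blend_example_exponential_log_series
    (h x θ : ℝ) (hh : 0 < h) (hx : 0 < x) :
    Summable (fun n : ℕ =>
      -(1 / h) * ((1 / n : ℝ) * ∑ k ∈ Finset.range (n + 1),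
        (-1 : ℝ) ^ k * (n.choose k : ℝ) *
          ((θ + k * h) * exp (-(θ + k * h) * x)))) ∧
    (∑' n : ℕ,
        -(1 / h) * ((1 / n : ℝ) * ∑ k ∈ Finset.range (n + 1),
          (-1 : ℝ) ^ k * (n.choose k : ℝ) *
            ((θ + k * h) * exp (-(θ + k * h) * x)))) =
      (1 - θ * x) * exp (-θ * x) ∧
    HasDerivAt (fun t : ℝ => t * exp (-t * x))
      ((1 - θ * x) * exp (-θ * x)) θ := by
  set r : ℝ := exp (-(h * x)) with hrdef
  have hr0 : 0 < r := exp_pos _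
  have hr1 : r < 1 := by
    rw [hrdef, exp_lt_one_iff]
    nlinarith
  have hq0 : (0 : ℝ) ≤ 1 - r := by linarith
  have hq1 : 1 - r < 1 := by linarith
  have hsplit : ∀ k : ℕ, exp (-(θ + k * h) * x) = exp (-θ * x) * r ^ k := by
    intro k
    rw [hrdef, ← Real.exp_nat_mul, ← Real.exp_add]
    congr 1; ring
  have hS : ∀ n : ℕ, ∑ k ∈ Finset.range (n + 2), (-1 : ℝ) ^ k * ((n+1).choose k : ℝ) *
        ((θ + k * h) * exp (-(θ + k * h) * x))
      = exp (-θ * x) * (θ * (1 - r) ^ (n+1) - ((n:ℝ)+1) * h * r * (1 - r) ^ n) := by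
    intro n
    have hterm : ∀ k ∈ Finset.range (n + 2), (-1 : ℝ) ^ k * ((n+1).choose k : ℝ) *
          ((θ + k * h) * exp (-(θ + k * h) * x))
        = exp (-θ * x) * (θ * ((-1:ℝ)^k * ((n+1).choose k : ℝ) * r ^ k)
            + h * ((-1:ℝ)^k * (k:ℝ) * ((n+1).choose k : ℝ) * r ^ k)) := by
      intro k _; rw [hsplit k]; ring
    rw [Finset.sum_congr rfl hterm, ← Finset.mul_sum]
    congr 1
    rw [Finset.sum_add_distrib, ← Finset.mul_sum, ← Finset.mul_sum, lemA r (n+1), lemB r n]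
    ring
  have hterm : ∀ n : ℕ,
      -(1 / h) * ((1 / ((n+1 : ℕ) : ℝ)) * ∑ k ∈ Finset.range ((n+1) + 1),
        (-1 : ℝ) ^ k * ((n+1).choose k : ℝ) * ((θ + k * h) * exp (-(θ + k * h) * x)))
      = exp (-θ * x) * (-(θ / h) * ((1 - r) ^ (n+1) / ((n:ℝ)+1)) + r * (1 - r) ^ n) := by
    intro n
    rw [show (n+1) + 1 = n + 2 from rfl, hS n]
    have hn : ((n:ℝ) + 1) ≠ 0 := by positivity
    field_simp
    push_cast
    ring
  have habs : |1 - r| < 1 := by rw [abs_of_nonneg hq0]; exact hq1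
  have h1 := hasSum_pow_div_log_of_abs_lt_one habs
  rw [show (1:ℝ) - (1 - r) = r by ring, hrdef, Real.log_exp, neg_neg] at h1
  have h2 := hasSum_geometric_of_lt_one hq0 hq1
  rw [show (1:ℝ) - (1 - r) = r by ring] at h2
  have hsum1 := ((h1.mul_left (-(θ / h))).add (h2.mul_left r)).mul_left (exp (-θ * x))
  have hval : exp (-θ * x) * (-(θ / h) * (h * x) + r * r⁻¹) = (1 - θ * x) * exp (-θ * x) := by
    rw [mul_inv_cancel₀ (ne_of_gt hr0)]
    field_simp
    ring
  rw [hval] at hsum1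
  have hs : HasSum (fun n : ℕ =>
      -(1 / h) * ((1 / ((n+1 : ℕ) : ℝ)) * ∑ k ∈ Finset.range ((n+1) + 1),
        (-1 : ℝ) ^ k * ((n+1).choose k : ℝ) * ((θ + k * h) * exp (-(θ + k * h) * x))))
      ((1 - θ * x) * exp (-θ * x)) := by
    have heq : (fun n : ℕ =>
        -(1 / h) * ((1 / ((n+1 : ℕ) : ℝ)) * ∑ k ∈ Finset.range ((n+1) + 1),
          (-1 : ℝ) ^ k * ((n+1).choose k : ℝ) * ((θ + k * h) * exp (-(θ + k * h) * x))))
        = fun n : ℕ => exp (-θ * x) * (-(θ / h) * ((1 - r) ^ (n+1) / ((n:ℝ)+1)) + r * (1 - r) ^ n) :=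
      funext hterm
    rw [heq]
    exact hsum1
  have hfull : HasSum (fun n : ℕ =>
      -(1 / h) * ((1 / n : ℝ) * ∑ k ∈ Finset.range (n + 1),
        (-1 : ℝ) ^ k * (n.choose k : ℝ) *
          ((θ + k * h) * exp (-(θ + k * h) * x)))) ((1 - θ * x) * exp (-θ * x)) := by
    have := (hasSum_nat_add_iff (f := fun n : ℕ =>
      -(1 / h) * ((1 / n : ℝ) * ∑ k ∈ Finset.range (n + 1),
        (-1 : ℝ) ^ k * (n.choose k : ℝ) *
          ((θ + k * h) * exp (-(θ + k * h) * x)))) 1).mp hs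
    simpa using this
  refine ⟨hfull.summable, hfull.tsum_eq, ?_⟩
  have hd1 : HasDerivAt (fun t : ℝ => -t * x) (-x) θ := by
    have heq : (fun t : ℝ => -t * x) = fun t : ℝ => t * (-x) := by funext t; ring
    rw [heq]
    simpa using hasDerivAt_mul_const (-x)
  have hd2 : HasDerivAt (fun t : ℝ => id t * exp (-t * x)) (1 * exp (-θ * x) + θ * (exp (-θ * x) * -x)) θ := ((hasDerivAt_id θ).mul hd1.exp)
  convert hd2 using 1
  simp [Real.exp_ne_zero]
  ring
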